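/- Let q be a power of 3 and let λ ∈ F_{q^2} \ {1} satisfy N_{F_{q^2}/F_q}(λ) = λ^{q+1} = 1. Then j(λ) = (λ+1)^6/(λ^2(λ-1)^2) = (λ^q + λ - 1)^3/(λ^q + λ + 1), and in particular j(λ) ∈ F_q. Moreover if λ ≠ -1 then j(λ) ≠ 0. -/

import Mathlib

open Polynomial in
lemma fixed_mem_range (F K : Type*) [Field F] [Fintype F] [Field K]
    [Algebra F K] (x : K) (hx : x ^ Fintype.card F = x) :
    x ∈ Set.range (algebraMap F K) := by
  classical
  set q := Fintype.card F with hq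
  have hq1 : 1 < q := Fintype.one_lt_card
  set p : K[X] := X ^ q - X with hp
  have hp0 : p ≠ 0 := FiniteField.X_pow_card_sub_X_ne_zero K hq1
  have hdeg : p.natDegree = q := FiniteField.X_pow_card_sub_X_natDegree_eq K hq1
  set T : Finset K := p.roots.toFinset with hT
  set A : Finset K := Finset.univ.image (algebraMap F K) with hA
  have hinj : Function.Injective (algebraMap F K) := (algebraMap F K).injective
  have hAT : A ⊆ T := by
    intro y hy
    simp only [hA, Finset.mem_image] at hy
    obtain ⟨a, -, rfl⟩ := hy
    rw [hT, Multiset.mem_toFinset, mem_roots hp0]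
    simp only [hT, Multiset.mem_toFinset, mem_roots hp0, hp, IsRoot.def, eval_sub, eval_pow,
      eval_X]
    rw [← map_pow, FiniteField.pow_card, sub_self]
  have hcardA : A.card = q := by
    rw [hA, Finset.card_image_of_injective _ hinj, Finset.card_univ]
  have hcardT : T.card ≤ q := by
    calc T.card ≤ Multiset.card p.roots := Multiset.toFinset_card_le _
    _ ≤ p.natDegree := p.card_roots' 
    _ = q := hdeg
  have hxT : x ∈ T := by
    rw [hT, Multiset.mem_toFinset, mem_roots hp0]
    simp only [hT, Multiset.mem_toFinset, mem_roots hp0, hp, IsRoot.def, eval_sub, eval_pow,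
      eval_X]
    rw [hx, sub_self]
  have : A = T := Finset.eq_of_subset_of_card_le hAT (hcardA ▸ hcardT)
  rw [← this, hA, Finset.mem_image] at hxT
  obtain ⟨a, -, rfl⟩ := hxT
  exact ⟨a, rfl⟩

/-- Let `q` be a power of 3, `F = F_q` and `K = F_{q^2}`.  If `λ ∈ K \ {1}` has
norm `λ^{q+1} = 1`, then `j(λ) = (λ+1)^6/(λ^2(λ-1)^2) = (λ^q+λ-1)^3/(λ^q+λ+1)`,
in particular `j(λ) ∈ F_q`; moreover `j(λ) ≠ 0` when `λ ≠ -1`. -/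
theorem stmt7 (F K : Type*) [Field F] [Fintype F] [CharP F 3] [Field K]
    [Algebra F K] (hdim : Module.finrank F K = 2) (l : K) (hl1 : l ≠ 1)
    (hl : l ^ (Fintype.card F + 1) = 1) :
    (l + 1) ^ 6 / (l ^ 2 * (l - 1) ^ 2)
        = (l ^ Fintype.card F + l - 1) ^ 3 / (l ^ Fintype.card F + l + 1) ∧
      (l + 1) ^ 6 / (l ^ 2 * (l - 1) ^ 2) ∈ Set.range (algebraMap F K) ∧
      (l ≠ -1 → (l + 1) ^ 6 / (l ^ 2 * (l - 1) ^ 2) ≠ 0) := by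
  have hchar : CharP K 3 := charP_of_injective_algebraMap (algebraMap F K).injective 3
  have h3 : (3 : K) = 0 := by exact_mod_cast CharP.cast_eq_zero K 3
  set q := Fintype.card F with hqdef
  have hl0 : l ≠ 0 := by
    rintro rfl
    rw [zero_pow (by omega)] at hl
    exact zero_ne_one hl
  have hlq : l ^ q = l⁻¹ := by
    rw [pow_succ] at hl
    field_simp
    exact hl
  have hsub : l - 1 ≠ 0 := sub_ne_zero.mpr hl1
  have hdenval : l⁻¹ + l + 1 = (l - 1) ^ 2 * l⁻¹ := by
    field_simp
    linear_combination l * h3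
  have hden : l⁻¹ + l + 1 ≠ 0 := by
    rw [hdenval]
    exact mul_ne_zero (pow_ne_zero _ hsub) (inv_ne_zero hl0)
  have hden2 : l ^ 2 * (l - 1) ^ 2 ≠ 0 := mul_ne_zero (pow_ne_zero _ hl0) (pow_ne_zero _ hsub)
  have heq : (l + 1) ^ 6 / (l ^ 2 * (l - 1) ^ 2)
      = (l ^ q + l - 1) ^ 3 / (l ^ q + l + 1) := by
    rw [hlq, div_eq_div_iff hden2 hden]
    field_simp
    ring_nf
    linear_combination (4*l + 3*l^2 + 21*l^3 + 8*l^4 + 21*l^5 + 3*l^6 + 4*l^7) * h3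
  refine ⟨heq, ?_, ?_⟩
  · -- membership
    obtain ⟨n, hprime, hn3⟩ := FiniteField.card F 3
    have hsfix : (l ^ q + l) ^ q = l ^ q + l := by
      have : (l ^ q + l) ^ q = (l ^ q) ^ q + l ^ q := by
        rw [hqdef, hn3]
        haveI : Fact (Nat.Prime 3) := ⟨by norm_num⟩
        exact add_pow_char_pow _ _ 3 n
      rw [this, hlq, inv_pow, hlq, inv_inv, add_comm]
    obtain ⟨s, hs⟩ := fixed_mem_range F K _ hsfix
    rw [heq]
    refine ⟨((s - 1) ^ 3) / (s + 1), ?_⟩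
    rw [map_div₀, map_pow, map_sub, map_add, map_one, hs]
  · intro hm1
    have hnum : l + 1 ≠ 0 := by
      intro h
      exact hm1 (eq_neg_of_add_eq_zero_left h)
    exact div_ne_zero (pow_ne_zero _ hnum) hden2
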